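/- Let X be an n×m real matrix and Z an n×k real matrix such that M_Z X has full column rank m, where P_Z = Z(Z^T Z)^† Z^T and M_Z = Id_n − P_Z. Let λ₁ be the smallest eigenvalue of (X^T M_Z X)^{-1} X^T X. Then the matrix M(κ) := X^T (κ P_Z + (1−κ) Id_n) X is positive definite if and only if κ < λ₁; it is singular positive semi-definite if and only if κ = λ₁; and it has at least one negative eigenvalue if and only if κ > λ₁. -/

import Mathlib

open Matrix
open scoped MatrixOrder

section Aux

variable {m n : ℕ}

private lemma ctr {a b : Type*} [Fintype a] [Fintype b] (M : Matrix a b ℝ) : Mᴴ = Mᵀ := by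
  ext i j; simp [conjTranspose_apply]

private lemma starv (x : Fin m → ℝ) : star x = x := by
  funext i; simp

end Aux

/-- characterization of definiteness of `M(κ) = Xᵀ(κ P_Z + (1-κ) Id) X`
in terms of the smallest eigenvalue `λ₁` of `(Xᵀ M_Z X)⁻¹ Xᵀ X`, where `P` is the
orthogonal projection onto the column span of `Z` and `M_Z X` has full column rank. -/
theorem stmt_0 {n m k : ℕ}
    (X : Matrix (Fin n) (Fin m) ℝ) (Z : Matrix (Fin n) (Fin k) ℝ)
    (P : Matrix (Fin n) (Fin n) ℝ)
    (hPsymm : P.IsSymm) (hPidem : P * P = P) (hPZ : P * Z = Z)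
    (hPrange : ∃ C : Matrix (Fin k) (Fin n) ℝ, P = Z * C)
    (hrank : ((1 - P) * X).rank = m)
    (lam1 : ℝ)
    (hEig : ∃ v : Fin m → ℝ, v ≠ 0 ∧
      ((Xᵀ * (1 - P) * X)⁻¹ * (Xᵀ * X)) *ᵥ v = lam1 • v)
    (hMin : ∀ μ : ℝ, (∃ v : Fin m → ℝ, v ≠ 0 ∧
      ((Xᵀ * (1 - P) * X)⁻¹ * (Xᵀ * X)) *ᵥ v = μ • v) → lam1 ≤ μ)
    (κ : ℝ) :
    ((Xᵀ * (κ • P + (1 - κ) • (1 : Matrix (Fin n) (Fin n) ℝ)) * X).PosDef ↔ κ < lam1) ∧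
    (((Xᵀ * (κ • P + (1 - κ) • (1 : Matrix (Fin n) (Fin n) ℝ)) * X).PosSemidef ∧
      (Xᵀ * (κ • P + (1 - κ) • (1 : Matrix (Fin n) (Fin n) ℝ)) * X).det = 0) ↔ κ = lam1) ∧
    ((∃ v : Fin m → ℝ, v ≠ 0 ∧
      v ⬝ᵥ (Xᵀ * (κ • P + (1 - κ) • (1 : Matrix (Fin n) (Fin n) ℝ)) * X) *ᵥ v < 0) ↔ lam1 < κ) := by
  classical
  set B : Matrix (Fin m) (Fin m) ℝ := Xᵀ * (1 - P) * X with hBdef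
  set G : Matrix (Fin m) (Fin m) ℝ := Xᵀ * X with hGdef
  set A : Matrix (Fin n) (Fin m) ℝ := (1 - P) * X with hAdef
  have hQsymm : (1 - P)ᵀ = (1 - P) := by
    rw [transpose_sub, transpose_one, hPsymm.eq]
  have hQidem : (1 - P) * (1 - P) = 1 - P := by
    simp [Matrix.mul_sub, Matrix.sub_mul, hPidem]
  have hBfact : B = Aᵀ * A := by
    have h : Aᵀ * A = Xᵀ * (1 - P) * X := by
      rw [hAdef, transpose_mul, hQsymm, Matrix.mul_assoc,
        ← Matrix.mul_assoc (1 - P), hQidem, ← Matrix.mul_assoc]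
    rw [hBdef, h]
  -- injectivity of A
  have hinj : ∀ x : Fin m → ℝ, A *ᵥ x = 0 → x = 0 := by
    intro x hx
    have hker : LinearMap.ker A.mulVecLin = ⊥ := by
      have h2 := A.mulVecLin.finrank_range_add_finrank_ker
      have h3 : Module.finrank ℝ (Fin m → ℝ) = m := by
        simp [Module.finrank_fintype_fun_eq_card]
      have h4 : Module.finrank ℝ (LinearMap.range A.mulVecLin) = m := hrank
      rw [h3, h4] at h2
      have h5 : Module.finrank ℝ (LinearMap.ker A.mulVecLin) = 0 := by omega
      exact Submodule.finrank_eq_zero.mp h5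
    have : x ∈ LinearMap.ker A.mulVecLin := hx
    rw [hker] at this
    simpa using this
  have quad : ∀ (Y : Matrix (Fin n) (Fin m) ℝ) (x : Fin m → ℝ),
      x ⬝ᵥ (Yᵀ * Y) *ᵥ x = (Y *ᵥ x) ⬝ᵥ (Y *ᵥ x) := by
    intro Y x
    rw [← mulVec_mulVec, dotProduct_mulVec, vecMul_transpose]
  have hBpd : B.PosDef := by
    refine PosDef.of_dotProduct_mulVec_pos ?_ ?_
    · rw [hBfact, ← ctr]
      exact isHermitian_conjTranspose_mul_self A
    · intro x hx
      rw [starv, hBfact, quad]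
      have hAx : A *ᵥ x ≠ 0 := fun h => hx (hinj x h)
      have := dotProduct_self_star_pos_iff (v := A *ᵥ x)
      rw [starv] at this
      exact this.mpr hAx
  have hGpsd : G.PosSemidef := by
    refine PosSemidef.of_dotProduct_mulVec_nonneg ?_ ?_
    · rw [hGdef, ← ctr]
      exact isHermitian_conjTranspose_mul_self X
    · intro x
      rw [starv, hGdef, quad]
      have := dotProduct_self_star_nonneg (X *ᵥ x)
      rwa [starv] at this
  -- the matrix identity
  have hM : Xᵀ * (κ • P + (1 - κ) • (1 : Matrix (Fin n) (Fin n) ℝ)) * X = G - κ • B := by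
    have h1 : κ • P + (1 - κ) • (1 : Matrix (Fin n) (Fin n) ℝ) = 1 - κ • (1 - P) := by
      module
    rw [h1, Matrix.mul_sub, Matrix.mul_one, Matrix.sub_mul, Matrix.mul_smul, Matrix.smul_mul,
      hGdef, hBdef, Matrix.mul_assoc]
  -- eigenvector facts
  obtain ⟨v, hv0, hv⟩ := hEig
  have hBunit : IsUnit B.det := hBpd.det_pos.ne'.isUnit
  have hGv : G *ᵥ v = lam1 • (B *ᵥ v) := by
    have h1 := congrArg (B *ᵥ ·) hv
    simp only [mulVec_mulVec, mulVec_smul] at h1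
    rwa [← Matrix.mul_assoc, Matrix.mul_nonsing_inv _ hBunit, Matrix.one_mul] at h1
  -- square root machinery
  have hBpsd := hBpd.posSemidef
  set R : Matrix (Fin m) (Fin m) ℝ := CFC.sqrt B with hRdef
  have hRpsd : R.PosSemidef := (CFC.sqrt_nonneg B).posSemidef
  have hRR : R * R = B := CFC.sqrt_mul_sqrt_self B hBpsd.nonneg
  have hRherm : Rᴴ = R := hRpsd.1
  have hRdet : IsUnit R.det := by
    have hd : R.det * R.det = B.det := by rw [← det_mul, hRR]
    refine isUnit_iff_ne_zero.mpr fun h => ?_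
    rw [h, zero_mul] at hd
    exact hBpd.det_pos.ne' hd.symm
  have hRinv : R * R⁻¹ = 1 := Matrix.mul_nonsing_inv _ hRdet
  have hRinv' : R⁻¹ * R = 1 := Matrix.nonsing_inv_mul _ hRdet
  have hRinvherm : (R⁻¹)ᴴ = R⁻¹ := by rw [conjTranspose_nonsing_inv, hRherm]
  set S : Matrix (Fin m) (Fin m) ℝ := R⁻¹ * G * R⁻¹ with hSdef
  have hGherm : Gᴴ = G := hGpsd.1
  have hSherm : Sᴴ = S := by
    rw [hSdef, conjTranspose_mul, conjTranspose_mul, hRinvherm, hGherm, hGdef]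
    simp only [Matrix.mul_assoc]
  set T : Matrix (Fin m) (Fin m) ℝ := S - lam1 • 1 with hTdef
  have hTherm : T.IsHermitian := by
    show Tᴴ = T
    rw [hTdef, conjTranspose_sub, hSherm, conjTranspose_smul, conjTranspose_one]
    norm_num
  have hBinvfact : B⁻¹ = R⁻¹ * R⁻¹ := by rw [← hRR, Matrix.mul_inv_rev]
  -- all eigenvalues of T are nonnegative
  have heig : ∀ i, 0 ≤ hTherm.eigenvalues i := by
    intro i
    set w : Fin m → ℝ := ⇑(hTherm.eigenvectorBasis i) with hwdef
    have hw0 : w ≠ 0 := fun h => hTherm.eigenvectorBasis.orthonormal.ne_zero i (by ext j; exact congrFun h j)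
    have hw : T *ᵥ w = hTherm.eigenvalues i • w := hTherm.mulVec_eigenvectorBasis i
    have hSw : S *ᵥ w = (hTherm.eigenvalues i + lam1) • w := by
      have h1 : S *ᵥ w - lam1 • w = hTherm.eigenvalues i • w := by
        rw [← hw, hTdef, sub_mulVec, smul_mulVec, one_mulVec]
      have h2 := sub_eq_iff_eq_add.mp h1
      rw [h2, add_smul]
    have hx0 : R⁻¹ *ᵥ w ≠ 0 := by
      intro h
      apply hw0
      have h2 := congrArg (R *ᵥ ·) h
      simp only [mulVec_mulVec, hRinv, one_mulVec, mulVec_zero] at h2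
      exact h2
    have hmain : ((Xᵀ * (1 - P) * X)⁻¹ * (Xᵀ * X)) *ᵥ (R⁻¹ *ᵥ w)
        = (hTherm.eigenvalues i + lam1) • (R⁻¹ *ᵥ w) := by
      show (B⁻¹ * G) *ᵥ (R⁻¹ *ᵥ w) = _
      have hfact : B⁻¹ * G * R⁻¹ = R⁻¹ * S := by
        rw [hBinvfact, hSdef]
        simp only [Matrix.mul_assoc]
      rw [mulVec_mulVec, hfact, ← mulVec_mulVec, hSw, mulVec_smul]
    have := hMin _ ⟨R⁻¹ *ᵥ w, hx0, hmain⟩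
    linarith
  have hTpsd : T.PosSemidef := hTherm.posSemidef_iff_eigenvalues_nonneg.mpr heig
  -- the key positive semidefiniteness
  have hRSR : R * S * R = G := by
    rw [hSdef]
    calc R * (R⁻¹ * G * R⁻¹) * R = R * R⁻¹ * G * (R⁻¹ * R) := by
          simp only [Matrix.mul_assoc]
      _ = G := by rw [hRinv, hRinv', Matrix.one_mul, Matrix.mul_one]
  have hKey : (G - lam1 • B).PosSemidef := by
    have h1 : G - lam1 • B = Rᴴ * T * R := by
      rw [hRherm, hTdef, Matrix.mul_sub, Matrix.sub_mul, hRSR, mul_smul_comm,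
        smul_mul_assoc, Matrix.mul_one, hRR]
    rw [h1]
    exact hTpsd.conjTranspose_mul_mul_same R
  -- kernel vector
  have hker : (G - lam1 • B) *ᵥ v = 0 := by
    rw [sub_mulVec, smul_mulVec, hGv, sub_self]
  have hdet0 : (G - lam1 • B).det = 0 := by
    rw [← Matrix.exists_mulVec_eq_zero_iff]
    exact ⟨v, hv0, hker⟩
  -- forward implications
  have fwd1 : ∀ c : ℝ, c < lam1 → (G - c • B).PosDef := by
    intro c hc
    have hsm : ((lam1 - c) • B).PosDef := by
      refine PosDef.of_dotProduct_mulVec_pos ?_ ?_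
      · show ((lam1 - c) • B)ᴴ = _
        rw [conjTranspose_smul, hBpd.1.eq]
        norm_num
      · intro x hx
        rw [smul_mulVec, dotProduct_smul, smul_eq_mul]
        exact mul_pos (by linarith) (hBpd.dotProduct_mulVec_pos hx)
    have heq : G - c • B = (G - lam1 • B) + (lam1 - c) • B := by module
    rw [heq]
    exact Matrix.PosDef.posSemidef_add hKey hsm
  have fwd3 : ∀ c : ℝ, lam1 < c → v ⬝ᵥ (G - c • B) *ᵥ v < 0 := by
    intro c hc
    have hBv : 0 < v ⬝ᵥ B *ᵥ v := by
      have := hBpd.dotProduct_mulVec_pos hv0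
      rwa [starv] at this
    have : v ⬝ᵥ (G - c • B) *ᵥ v = (lam1 - c) * (v ⬝ᵥ B *ᵥ v) := by
      rw [sub_mulVec, smul_mulVec, hGv, dotProduct_sub, dotProduct_smul,
        dotProduct_smul, smul_eq_mul, smul_eq_mul]
      ring
    rw [this]
    exact mul_neg_of_neg_of_pos (by linarith) hBv
  rw [hM]
  refine ⟨⟨?_, fwd1 κ⟩, ⟨?_, ?_⟩, ⟨?_, fun h => ⟨v, hv0, fwd3 κ h⟩⟩⟩
  · intro hpd
    by_contra hcon
    push_neg at hcon
    rcases eq_or_lt_of_le hcon with heq | hlt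
    · rw [heq] at hdet0
      exact hpd.det_pos.ne' hdet0
    · have hneg := fwd3 κ hlt
      have := hpd.posSemidef.dotProduct_mulVec_nonneg v
      rw [starv] at this
      linarith
  · rintro ⟨hpsd, hdet⟩
    rcases lt_trichotomy κ lam1 with hlt | heq | hgt
    · exact absurd hdet (fwd1 κ hlt).det_pos.ne'
    · exact heq
    · have hneg := fwd3 κ hgt
      have := hpsd.dotProduct_mulVec_nonneg v
      rw [starv] at this
      linarith
  · rintro rfl
    exact ⟨hKey, hdet0⟩
  · rintro ⟨w, hw0, hwneg⟩
    by_contra hcon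
    push_neg at hcon
    rcases eq_or_lt_of_le hcon with heq | hlt
    · rw [← heq] at hKey
      have := hKey.dotProduct_mulVec_nonneg w
      rw [starv] at this
      linarith
    · have := (fwd1 κ hlt).posSemidef.dotProduct_mulVec_nonneg w
      rw [starv] at this
      linarith
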